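/- (Dual rank formula) Let L be a finite modular lattice, I a supermatroid on L with base family B (maximal elements of I), and r(X) = max_{B ∈ B} |B ∧ X| the rank function. The dual supermatroid on the order dual L* has bases B* = B (under the identity order-reversing map), and its rank function r* satisfies r*(X) = r(X) + (|⊤| − |X|) − r(⊤) for all X ∈ L, where heights are taken in L. -/

import Mathlib

/-- The height of an element: length of a maximal chain from the bottom. -/
noncomputable def ht {α : Type*} [Preorder α] (x : α) : ℕ := (Order.height x).toNat

section Aux

variable {α : Type*} [Lattice α] [Fintype α] [IsModularLattice α]

lemma my_height_ne_top (x : α) : Order.height x ≠ ⊤ := by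
  have h : Order.height x ≤ (Fintype.card α : ℕ∞) :=
    Order.height_le fun p _ => by exact_mod_cast (p.length_lt_card).le
  exact ne_top_of_le_ne_top (ENat.coe_ne_top _) h

lemma ht_cast (x : α) : (ht x : ℕ∞) = Order.height x := ENat.coe_toNat (my_height_ne_top x)

lemma ht_lt {a b : α} (h : a < b) : ht a < ht b := by
  have := Order.height_strictMono h ((my_height_ne_top a).lt_top)
  rwa [← ht_cast a, ← ht_cast b, Nat.cast_lt] at this

lemma ht_mono {a b : α} (h : a ≤ b) : ht a ≤ ht b := by
  have := Order.height_mono h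
  rwa [← ht_cast a, ← ht_cast b, Nat.cast_le] at this

/-- In a finite modular lattice, covers increase height by exactly one. -/
lemma ht_covBy : ∀ n : ℕ, ∀ a b : α, ht b = n → a ⋖ b → ht b = ht a + 1 := by
  intro n
  induction n using Nat.strong_induction_on with
  | _ n IH =>
    intro a b hn hab
    have hlt : ht a < ht b := ht_lt hab.lt
    obtain ⟨m, hm⟩ : ∃ m, ht b = m + 1 := ⟨ht b - 1, by omega⟩
    have hbm : Order.height b = ((m + 1 : ℕ) : ℕ∞) := by
      rw [← ht_cast, hm]
    rw [Nat.cast_add, Nat.cast_one, Order.height_eq_coe_add_one_iff] at hbm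
    obtain ⟨-, ⟨x, hxb, hx⟩, hall⟩ := hbm
    have hxm : ht x = m := by
      have h2 := hx; rw [← ht_cast x] at h2; exact_mod_cast h2
    have hxcov : x ⋖ b := by
      refine ⟨hxb, fun y hxy hyb => ?_⟩
      have h1 : ht x < ht y := ht_lt hxy
      have h2 : Order.height y ≤ (m : ℕ∞) := hall y hyb
      rw [← ht_cast y, Nat.cast_le] at h2
      omega
    by_cases hax : a = x
    · subst hax; omega
    · have hxa : ¬ x ≤ a := fun hle =>
        (lt_or_eq_of_le hle).elim (fun h => hxcov.2 h hab.lt) (fun h => hax h.symm)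
      have h1 : a < a ⊔ x := lt_of_le_of_ne le_sup_left
        (fun h => hxa (le_sup_right.trans h.ge))
      have h2 : a ⊔ x ≤ b := sup_le hab.lt.le hxb.le
      have hsup : a ⊔ x = b := by
        rcases lt_or_eq_of_le h2 with h | h
        · exact absurd h (hab.2 h1)
        · exact h
      have hacov : a ⋖ a ⊔ x := hsup ▸ hab
      have hxcov' : x ⋖ a ⊔ x := hsup ▸ hxcov
      have hinfa : a ⊓ x ⋖ a :=
        inf_covBy_of_covBy_sup_of_covBy_sup_left hacov hxcov'
      have hinfx : a ⊓ x ⋖ x :=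
        inf_covBy_of_covBy_sup_of_covBy_sup_right hacov hxcov'
      have hx' : ht x = ht (a ⊓ x) + 1 := IH (ht x) (by omega) _ _ rfl hinfx
      have ha' : ht a = ht (a ⊓ x) + 1 := IH (ht a) (by omega) _ _ rfl hinfa
      omega

/-- Modular law for heights, by induction. -/
lemma ht_sup_inf_aux : ∀ k : ℕ, ∀ a b : α, ht a - ht (a ⊓ b) = k →
    ht (a ⊔ b) + ht (a ⊓ b) = ht a + ht b := by
  intro k
  induction k using Nat.strong_induction_on with
  | _ k IH =>
    intro a b hk
    by_cases hab : a ≤ b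
    · rw [sup_eq_right.mpr hab, inf_eq_left.mpr hab]; omega
    · have hlt : a ⊓ b < a := lt_of_le_of_ne inf_le_left (fun h => hab (h ▸ inf_le_right))
      have hsa : IsStronglyAtomic α := IsStronglyAtomic.of_wellFounded_lt wellFounded_lt
      obtain ⟨c, hcov, hca⟩ := exists_covBy_le_of_lt hlt
      have hcb : c ⊓ b = a ⊓ b := le_antisymm
        (le_inf (inf_le_left.trans hca) inf_le_right)
        (le_inf hcov.lt.le inf_le_right)
      have hbcov : b ⋖ c ⊔ b := covBy_sup_of_inf_covBy_left (hcb ▸ hcov)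
      have hmod : a ⊓ (c ⊔ b) = c := by
        have h1 : (c ⊔ b) ⊓ a = c ⊔ (b ⊓ a) := sup_inf_assoc_of_le b hca
        have h2 : b ⊓ a ≤ c := (inf_comm b a ▸ hcov.lt.le : b ⊓ a ≤ c)
        rw [inf_comm, h1, sup_eq_left.mpr h2]
      have hsup : a ⊔ (c ⊔ b) = a ⊔ b := by
        rw [← sup_assoc, sup_eq_left.mpr hca]
      have hhc : ht c = ht (a ⊓ b) + 1 := ht_covBy (ht c) _ _ rfl hcov
      have hhcb : ht (c ⊔ b) = ht b + 1 := ht_covBy (ht (c ⊔ b)) _ _ rfl hbcov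
      have hstrict : ht (a ⊓ b) < ht a := ht_lt hlt
      have hmeas : ht a - ht (a ⊓ (c ⊔ b)) < k := by
        rw [hmod]; omega
      have := IH _ hmeas a (c ⊔ b) rfl
      rw [hmod, hsup, hhcb] at this
      omega

/-- Modular law for heights in a finite modular lattice. -/
lemma ht_sup_add_ht_inf (a b : α) : ht (a ⊔ b) + ht (a ⊓ b) = ht a + ht b :=
  ht_sup_inf_aux _ a b rfl

end Aux

lemma sSup_add_const {s : Set ℤ} (hs : s.Nonempty) (hb : BddAbove s) (c : ℤ) :
    sSup ((fun n => n + c) '' s) = sSup s + c := by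
  obtain ⟨M, hM⟩ := hb
  have hb' : BddAbove ((fun n => n + c) '' s) :=
    ⟨M + c, by rintro y ⟨x, hx, rfl⟩; exact add_le_add_left (hM hx) c⟩
  apply le_antisymm
  · refine csSup_le (hs.image _) ?_
    rintro y ⟨x, hx, rfl⟩
    exact add_le_add_left (le_csSup ⟨M, hM⟩ hx) c
  · have h : sSup s ≤ sSup ((fun n => n + c) '' s) - c :=
      csSup_le hs fun x hx => le_sub_iff_add_le.mpr (le_csSup hb' ⟨x, hx, rfl⟩)
    linarith

/-- Dual rank formula: the rank function of the dual supermatroid (on the order dual,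
with the same bases, where the height of `Y` in the dual is `ht ⊤ - ht Y` and meet in
the dual is join) satisfies `r*(X) = r(X) + (|⊤| - |X|) - r(⊤)`. -/
theorem dual_rank_formula {α : Type*} [Lattice α] [Fintype α] [BoundedOrder α]
    [IsModularLattice α]
    (𝓘 : Set α) (hne : 𝓘.Nonempty) (hideal : IsLowerSet 𝓘)
    (hH2 : ∀ X I₁ I₂ : α, Maximal (fun J => J ∈ 𝓘 ∧ J ≤ X) I₁ →
        Maximal (fun J => J ∈ 𝓘 ∧ J ≤ X) I₂ → ht I₁ = ht I₂)
    (r rstar : α → ℤ)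
    (hr : ∀ X : α, r X = sSup {n : ℤ | ∃ B : α, Maximal (· ∈ 𝓘) B ∧ n = ht (B ⊓ X)})
    (hrstar : ∀ X : α, rstar X =
        sSup {n : ℤ | ∃ B : α, Maximal (· ∈ 𝓘) B ∧ n = (ht (⊤ : α) : ℤ) - ht (B ⊔ X)}) :
    ∀ X : α, rstar X = r X + ((ht (⊤ : α) : ℤ) - ht X) - r ⊤ := by
  -- a base exists
  obtain ⟨B₀, hB₀mem, hB₀max⟩ := Set.Finite.exists_maximal (Set.toFinite 𝓘) hne
  have hB₀ : Maximal (· ∈ 𝓘) B₀ := ⟨hB₀mem, fun y hy hle => hB₀max hy hle⟩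
  -- all bases have the same height
  have hbase_ht : ∀ B : α, Maximal (· ∈ 𝓘) B → ht B = ht B₀ := by
    intro B hB
    refine hH2 ⊤ B B₀ ?_ ?_ <;>
      exact ⟨⟨‹Maximal (· ∈ 𝓘) _›.1, le_top⟩, fun y hy hle => ‹Maximal (· ∈ 𝓘) _›.2 hy.1 hle⟩
  set h0 : ℤ := (ht B₀ : ℤ) with hh0
  -- r ⊤ = h0
  have hrtop : r ⊤ = h0 := by
    rw [hr ⊤]
    have : {n : ℤ | ∃ B : α, Maximal (· ∈ 𝓘) B ∧ n = ht (B ⊓ ⊤)} = {h0} := by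
      ext n
      simp only [Set.mem_setOf_eq, Set.mem_singleton_iff, inf_top_eq]
      constructor
      · rintro ⟨B, hB, rfl⟩; rw [hbase_ht B hB]
      · rintro rfl; exact ⟨B₀, hB₀, by rw [hh0]⟩
    rw [this, csSup_singleton]
  intro X
  set Sr : Set ℤ := {n : ℤ | ∃ B : α, Maximal (· ∈ 𝓘) B ∧ n = ht (B ⊓ X)} with hSr
  set c : ℤ := ((ht (⊤ : α) : ℤ) - ht X) - h0 with hc
  have hSrne : Sr.Nonempty := ⟨ht (B₀ ⊓ X), B₀, hB₀, rfl⟩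
  have hSrbdd : BddAbove Sr := by
    refine ⟨(ht (⊤ : α) : ℤ), ?_⟩
    rintro n ⟨B, hB, rfl⟩
    exact_mod_cast ht_mono (le_top : B ⊓ X ≤ ⊤)
  -- key: the dual-rank set is the shift of the rank set
  have hkey : ∀ B : α, Maximal (· ∈ 𝓘) B →
      (ht (⊤ : α) : ℤ) - ht (B ⊔ X) = (ht (B ⊓ X) : ℤ) + c := by
    intro B hB
    have hmod := ht_sup_add_ht_inf B X
    have hhB := hbase_ht B hB
    rw [hc, hh0]
    push_cast
    omega
  have hsets : {n : ℤ | ∃ B : α, Maximal (· ∈ 𝓘) B ∧ n = (ht (⊤ : α) : ℤ) - ht (B ⊔ X)}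
      = (fun n => n + c) '' Sr := by
    ext n
    simp only [Set.mem_setOf_eq, Set.mem_image, hSr]
    constructor
    · rintro ⟨B, hB, rfl⟩
      exact ⟨ht (B ⊓ X), ⟨B, hB, rfl⟩, (hkey B hB).symm⟩
    · rintro ⟨m, ⟨B, hB, rfl⟩, rfl⟩
      exact ⟨B, hB, (hkey B hB).symm⟩
  rw [hrstar X, hsets, sSup_add_const hSrne hSrbdd c, hr X, ← hSr, hrtop, hc]
  ring
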